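/- Let 0 < a < b, μ > 0 and α > 0. Let u : ℝ² → ℝ² be twice continuously differentiable and P : ℝ² → ℝ continuously differentiable on a neighborhood of the closed annulus {x : a ≤ |x| ≤ b}, satisfying on Ω: div u = 0 and (u·∇)u = μΔu − ∇P; suppose u(x)·x = 0 whenever |x| ∈ {a, b}, that ∂₁u₂(x) − ∂₂u₁(x) = 0 whenever |x| = b, and that u satisfies the Navier-slip condition on |x| = a. Then μ ∫_Ω Σ_{i,j=1}² (∂ᵢuⱼ(x))² dx + (μ/b) ∮_{∂B(0,b)} u_τ² ds = (α − μ/a) ∮_{∂B(0,a)} u_τ² ds. Consequently, if α ≤ μ/a then u vanishes identically on Ω. -/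

import Mathlib

open Real MeasureTheory

noncomputable section

/-- Partial derivative `∂₁ f` of a scalar function on `ℝ²`. -/
def pd1 (f : ℝ × ℝ → ℝ) : ℝ × ℝ → ℝ := fun x => fderiv ℝ f x (1, 0)

/-- Partial derivative `∂₂ f` of a scalar function on `ℝ²`. -/
def pd2 (f : ℝ × ℝ → ℝ) : ℝ × ℝ → ℝ := fun x => fderiv ℝ f x (0, 1)

/-- First component of a vector field on `ℝ²`. -/
def cmp1 (v : ℝ × ℝ → ℝ × ℝ) : ℝ × ℝ → ℝ := fun x => (v x).1

/-- Second component of a vector field on `ℝ²`. -/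
def cmp2 (v : ℝ × ℝ → ℝ × ℝ) : ℝ × ℝ → ℝ := fun x => (v x).2

/-- The open annulus `Ω = {x ∈ ℝ² : a < |x| < b}`. -/
def ann (a b : ℝ) : Set (ℝ × ℝ) := {x | a ^ 2 < x.1 ^ 2 + x.2 ^ 2 ∧ x.1 ^ 2 + x.2 ^ 2 < b ^ 2}

/-- The closed annulus `{x ∈ ℝ² : a ≤ |x| ≤ b}`. -/
def cann (a b : ℝ) : Set (ℝ × ℝ) := {x | a ^ 2 ≤ x.1 ^ 2 + x.2 ^ 2 ∧ x.1 ^ 2 + x.2 ^ 2 ≤ b ^ 2}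

/-- The circle `∂B(0, r) = {x ∈ ℝ² : |x| = r}`. -/
def circ (r : ℝ) : Set (ℝ × ℝ) := {x | x.1 ^ 2 + x.2 ^ 2 = r ^ 2}

/-- Boundary integral `∮_{∂B(0,r)} f ds = ∫₀^{2π} f(r cos θ, r sin θ) r dθ`. -/
def bInt (r : ℝ) (f : ℝ × ℝ → ℝ) : ℝ :=
  ∫ θ in (0 : ℝ)..(2 * π), f (r * Real.cos θ, r * Real.sin θ) * r

/-- Tangential component `v_τ(x) = v(x)·(x₂, −x₁)/r` on the circle of radius `r`. -/
def tang (r : ℝ) (v : ℝ × ℝ → ℝ × ℝ) : ℝ × ℝ → ℝ :=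
  fun x => ((v x).1 * x.2 - (v x).2 * x.1) / r

/-- The Navier-slip condition on the inner circle `|x| = a`:
`μ Σ_{i,j} τ_i(x) n_j(x) (∂_i v_j(x) + ∂_j v_i(x)) = α v(x)·τ(x)` for all `|x| = a`,
where `n(x) = −x/a` and `τ(x) = (x₂, −x₁)/a`. -/
def navierSlip (μ α a : ℝ) (v : ℝ × ℝ → ℝ × ℝ) : Prop :=
  ∀ x : ℝ × ℝ, x.1 ^ 2 + x.2 ^ 2 = a ^ 2 →
    μ * ((x.2 / a) * (-(x.1 / a)) * (pd1 (cmp1 v) x + pd1 (cmp1 v) x)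
       + (x.2 / a) * (-(x.2 / a)) * (pd1 (cmp2 v) x + pd2 (cmp1 v) x)
       + (-(x.1 / a)) * (-(x.1 / a)) * (pd2 (cmp1 v) x + pd1 (cmp2 v) x)
       + (-(x.1 / a)) * (-(x.2 / a)) * (pd2 (cmp2 v) x + pd2 (cmp2 v) x))
    = α * ((v x).1 * (x.2 / a) + (v x).2 * (-(x.1 / a)))


lemma fderiv_apply_pair (f : ℝ × ℝ → ℝ) (x : ℝ × ℝ) (p q : ℝ) :
    fderiv ℝ f x (p, q) = p * pd1 f x + q * pd2 f x := by
  have h : (p, q) = p • ((1:ℝ), (0:ℝ)) + q • ((0:ℝ), (1:ℝ)) := by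
    simp [Prod.ext_iff]
  rw [h, map_add, _root_.map_smul, _root_.map_smul, pd1, pd2, smul_eq_mul, smul_eq_mul]

lemma hasDerivAt_comp_curve {f : ℝ × ℝ → ℝ} {γ₁ γ₂ : ℝ → ℝ} {d₁ d₂ : ℝ} {t : ℝ}
    (h₁ : HasDerivAt γ₁ d₁ t) (h₂ : HasDerivAt γ₂ d₂ t)
    (hf : DifferentiableAt ℝ f (γ₁ t, γ₂ t)) :
    HasDerivAt (fun s => f (γ₁ s, γ₂ s))
      (d₁ * pd1 f (γ₁ t, γ₂ t) + d₂ * pd2 f (γ₁ t, γ₂ t)) t := by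
  have hc := hf.hasFDerivAt.comp_hasDerivAt t (h₁.prodMk h₂)
  rwa [fderiv_apply_pair] at hc

lemma pd1_contDiffOn {f : ℝ × ℝ → ℝ} {U : Set (ℝ × ℝ)} (hf : ContDiffOn ℝ 2 f U)
    (hU : IsOpen U) : ContDiffOn ℝ 1 (pd1 f) U :=
  (hf.fderiv_of_isOpen hU (by norm_num)).clm_apply contDiffOn_const

lemma pd2_contDiffOn {f : ℝ × ℝ → ℝ} {U : Set (ℝ × ℝ)} (hf : ContDiffOn ℝ 2 f U)
    (hU : IsOpen U) : ContDiffOn ℝ 1 (pd2 f) U :=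
  (hf.fderiv_of_isOpen hU (by norm_num)).clm_apply contDiffOn_const

lemma pd1_continuousOn {f : ℝ × ℝ → ℝ} {U : Set (ℝ × ℝ)} (hf : ContDiffOn ℝ 1 f U)
    (hU : IsOpen U) : ContinuousOn (pd1 f) U :=
  (hf.continuousOn_fderiv_of_isOpen hU le_rfl).clm_apply continuousOn_const

lemma pd2_continuousOn {f : ℝ × ℝ → ℝ} {U : Set (ℝ × ℝ)} (hf : ContDiffOn ℝ 1 f U)
    (hU : IsOpen U) : ContinuousOn (pd2 f) U :=
  (hf.continuousOn_fderiv_of_isOpen hU le_rfl).clm_apply continuousOn_const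

lemma diffAt_of_contDiffOn {f : ℝ × ℝ → ℝ} {U : Set (ℝ × ℝ)} (hf : ContDiffOn ℝ 1 f U)
    (hU : IsOpen U) {x : ℝ × ℝ} (hx : x ∈ U) : DifferentiableAt ℝ f x :=
  (hf.differentiableOn one_ne_zero).differentiableAt (hU.mem_nhds hx)

section Flux
variable (μ : ℝ) (u1 u2 P : ℝ × ℝ → ℝ)

def qq : ℝ × ℝ → ℝ := fun x => (u1 x ^ 2 + u2 x ^ 2) / 2 + P x

def WW1 : ℝ × ℝ → ℝ := fun x =>
  μ * (u1 x * pd1 u1 x + u2 x * pd1 u2 x) - qq u1 u2 P x * u1 x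

def WW2 : ℝ × ℝ → ℝ := fun x =>
  μ * (u1 x * pd2 u1 x + u2 x * pd2 u2 x) - qq u1 u2 P x * u2 x

def pW11 : ℝ × ℝ → ℝ := fun x =>
  μ * (pd1 u1 x * pd1 u1 x + u1 x * pd1 (pd1 u1) x
     + pd1 u2 x * pd1 u2 x + u2 x * pd1 (pd1 u2) x)
  - ((u1 x * pd1 u1 x + u2 x * pd1 u2 x + pd1 P x) * u1 x + qq u1 u2 P x * pd1 u1 x)

def pW12 : ℝ × ℝ → ℝ := fun x =>
  μ * (pd2 u1 x * pd1 u1 x + u1 x * pd2 (pd1 u1) x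
     + pd2 u2 x * pd1 u2 x + u2 x * pd2 (pd1 u2) x)
  - ((u1 x * pd2 u1 x + u2 x * pd2 u2 x + pd2 P x) * u1 x + qq u1 u2 P x * pd2 u1 x)

def pW21 : ℝ × ℝ → ℝ := fun x =>
  μ * (pd1 u1 x * pd2 u1 x + u1 x * pd1 (pd2 u1) x
     + pd1 u2 x * pd2 u2 x + u2 x * pd1 (pd2 u2) x)
  - ((u1 x * pd1 u1 x + u2 x * pd1 u2 x + pd1 P x) * u2 x + qq u1 u2 P x * pd1 u2 x)

def pW22 : ℝ × ℝ → ℝ := fun x =>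
  μ * (pd2 u1 x * pd2 u1 x + u1 x * pd2 (pd2 u1) x
     + pd2 u2 x * pd2 u2 x + u2 x * pd2 (pd2 u2) x)
  - ((u1 x * pd2 u1 x + u2 x * pd2 u2 x + pd2 P x) * u2 x + qq u1 u2 P x * pd2 u2 x)

def EE1 : ℝ × ℝ → ℝ := fun p =>
  (WW1 μ u1 u2 P (p.1 * cos p.2, p.1 * sin p.2) * cos p.2
    + WW2 μ u1 u2 P (p.1 * cos p.2, p.1 * sin p.2) * sin p.2)
  + p.1 * ((cos p.2 * pW11 μ u1 u2 P (p.1 * cos p.2, p.1 * sin p.2)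
            + sin p.2 * pW12 μ u1 u2 P (p.1 * cos p.2, p.1 * sin p.2)) * cos p.2
         + (cos p.2 * pW21 μ u1 u2 P (p.1 * cos p.2, p.1 * sin p.2)
            + sin p.2 * pW22 μ u1 u2 P (p.1 * cos p.2, p.1 * sin p.2)) * sin p.2)

def EE2 : ℝ × ℝ → ℝ := fun p =>
  -(((-(p.1 * sin p.2)) * pW11 μ u1 u2 P (p.1 * cos p.2, p.1 * sin p.2)
     + (p.1 * cos p.2) * pW12 μ u1 u2 P (p.1 * cos p.2, p.1 * sin p.2)) * sin p.2)
  - WW1 μ u1 u2 P (p.1 * cos p.2, p.1 * sin p.2) * cos p.2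
  + (((-(p.1 * sin p.2)) * pW21 μ u1 u2 P (p.1 * cos p.2, p.1 * sin p.2)
     + (p.1 * cos p.2) * pW22 μ u1 u2 P (p.1 * cos p.2, p.1 * sin p.2)) * cos p.2)
  - WW2 μ u1 u2 P (p.1 * cos p.2, p.1 * sin p.2) * sin p.2

variable {U : Set (ℝ × ℝ)}

lemma hasDerivAt_WW1_curve (hU : IsOpen U) (hu1 : ContDiffOn ℝ 2 u1 U)
    (hu2 : ContDiffOn ℝ 2 u2 U) (hP : ContDiffOn ℝ 1 P U)
    {γ₁ γ₂ : ℝ → ℝ} {d₁ d₂ t : ℝ}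
    (h₁ : HasDerivAt γ₁ d₁ t) (h₂ : HasDerivAt γ₂ d₂ t) (hx : (γ₁ t, γ₂ t) ∈ U) :
    HasDerivAt (fun s => WW1 μ u1 u2 P (γ₁ s, γ₂ s))
      (d₁ * pW11 μ u1 u2 P (γ₁ t, γ₂ t) + d₂ * pW12 μ u1 u2 P (γ₁ t, γ₂ t)) t := by
  have Hu1 := hasDerivAt_comp_curve h₁ h₂ (diffAt_of_contDiffOn (hu1.of_le one_le_two) hU hx)
  have Hu2 := hasDerivAt_comp_curve h₁ h₂ (diffAt_of_contDiffOn (hu2.of_le one_le_two) hU hx)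
  have HP := hasDerivAt_comp_curve h₁ h₂ (diffAt_of_contDiffOn hP hU hx)
  have HA := hasDerivAt_comp_curve h₁ h₂ (diffAt_of_contDiffOn (pd1_contDiffOn hu1 hU) hU hx)
  have HB := hasDerivAt_comp_curve h₁ h₂ (diffAt_of_contDiffOn (pd1_contDiffOn hu2 hU) hU hx)
  have comb := (((Hu1.mul HA).add (Hu2.mul HB)).const_mul μ).sub
    (((((Hu1.pow 2).add (Hu2.pow 2)).div_const 2).add HP).mul Hu1)
  convert comb using 1
  · rfl
  · rfl
  · funext s
    simp [pW11, pW12, WW1, qq]; try ring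
  all_goals (simp [pW11, pW12, WW1, qq]; try ring)

lemma hasDerivAt_WW2_curve (hU : IsOpen U) (hu1 : ContDiffOn ℝ 2 u1 U)
    (hu2 : ContDiffOn ℝ 2 u2 U) (hP : ContDiffOn ℝ 1 P U)
    {γ₁ γ₂ : ℝ → ℝ} {d₁ d₂ t : ℝ}
    (h₁ : HasDerivAt γ₁ d₁ t) (h₂ : HasDerivAt γ₂ d₂ t) (hx : (γ₁ t, γ₂ t) ∈ U) :
    HasDerivAt (fun s => WW2 μ u1 u2 P (γ₁ s, γ₂ s))
      (d₁ * pW21 μ u1 u2 P (γ₁ t, γ₂ t) + d₂ * pW22 μ u1 u2 P (γ₁ t, γ₂ t)) t := by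
  have Hu1 := hasDerivAt_comp_curve h₁ h₂ (diffAt_of_contDiffOn (hu1.of_le one_le_two) hU hx)
  have Hu2 := hasDerivAt_comp_curve h₁ h₂ (diffAt_of_contDiffOn (hu2.of_le one_le_two) hU hx)
  have HP := hasDerivAt_comp_curve h₁ h₂ (diffAt_of_contDiffOn hP hU hx)
  have HC := hasDerivAt_comp_curve h₁ h₂ (diffAt_of_contDiffOn (pd2_contDiffOn hu1 hU) hU hx)
  have HD := hasDerivAt_comp_curve h₁ h₂ (diffAt_of_contDiffOn (pd2_contDiffOn hu2 hU) hU hx)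
  have comb := (((Hu1.mul HC).add (Hu2.mul HD)).const_mul μ).sub
    (((((Hu1.pow 2).add (Hu2.pow 2)).div_const 2).add HP).mul Hu2)
  convert comb using 1
  · rfl
  · rfl
  · funext s
    simp [pW21, pW22, WW2, qq]; try ring
  all_goals (simp [pW21, pW22, WW2, qq]; try ring)

lemma hasDerivAt_V1 (hU : IsOpen U) (hu1 : ContDiffOn ℝ 2 u1 U)
    (hu2 : ContDiffOn ℝ 2 u2 U) (hP : ContDiffOn ℝ 1 P U)
    {r θ : ℝ} (hx : ((r * cos θ, r * sin θ) : ℝ × ℝ) ∈ U) :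
    HasDerivAt (fun t => t * (WW1 μ u1 u2 P (t * cos θ, t * sin θ) * cos θ
        + WW2 μ u1 u2 P (t * cos θ, t * sin θ) * sin θ)) (EE1 μ u1 u2 P (r, θ)) r := by
  have h₁ : HasDerivAt (fun t : ℝ => t * cos θ) (cos θ) r := hasDerivAt_mul_const _
  have h₂ : HasDerivAt (fun t : ℝ => t * sin θ) (sin θ) r := hasDerivAt_mul_const _
  have hW1 := hasDerivAt_WW1_curve μ u1 u2 P hU hu1 hu2 hP h₁ h₂ hx
  have hW2 := hasDerivAt_WW2_curve μ u1 u2 P hU hu1 hu2 hP h₁ h₂ hx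
  have comb := (hasDerivAt_id r).mul ((hW1.mul_const (cos θ)).add (hW2.mul_const (sin θ)))
  convert comb using 1
  · rfl
  · rfl
  · funext s
    simp [EE1]; try ring
  all_goals (simp [EE1]; try ring)

lemma hasDerivAt_V2 (hU : IsOpen U) (hu1 : ContDiffOn ℝ 2 u1 U)
    (hu2 : ContDiffOn ℝ 2 u2 U) (hP : ContDiffOn ℝ 1 P U)
    {r θ : ℝ} (hx : ((r * cos θ, r * sin θ) : ℝ × ℝ) ∈ U) :
    HasDerivAt (fun ψ => -(WW1 μ u1 u2 P (r * cos ψ, r * sin ψ)) * sin ψ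
        + WW2 μ u1 u2 P (r * cos ψ, r * sin ψ) * cos ψ) (EE2 μ u1 u2 P (r, θ)) θ := by
  have h₁ : HasDerivAt (fun ψ : ℝ => r * cos ψ) (-(r * sin θ)) θ := by
    have := (Real.hasDerivAt_cos θ).const_mul r
    convert this using 1
    · rfl
    · rfl
    · ring
  have h₂ : HasDerivAt (fun ψ : ℝ => r * sin ψ) (r * cos θ) θ :=
    (Real.hasDerivAt_sin θ).const_mul r
  have hW1 := hasDerivAt_WW1_curve μ u1 u2 P hU hu1 hu2 hP h₁ h₂ hx
  have hW2 := hasDerivAt_WW2_curve μ u1 u2 P hU hu1 hu2 hP h₁ h₂ hx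
  have comb := (hW1.neg.mul (Real.hasDerivAt_sin θ)).add (hW2.mul (Real.hasDerivAt_cos θ))
  convert comb using 1
  · rfl
  · rfl
  · funext s
    simp [EE2]; try ring
  all_goals (simp [EE2]; try ring)

end Flux

lemma EE_sum (μ : ℝ) (u1 u2 P : ℝ × ℝ → ℝ) (p : ℝ × ℝ) :
    EE1 μ u1 u2 P p + EE2 μ u1 u2 P p
      = p.1 * (pW11 μ u1 u2 P (p.1 * cos p.2, p.1 * sin p.2)
             + pW22 μ u1 u2 P (p.1 * cos p.2, p.1 * sin p.2)) := by
  have hcs := Real.sin_sq_add_cos_sq p.2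
  simp only [EE1, EE2]
  linear_combination (p.1 * (pW11 μ u1 u2 P (p.1 * cos p.2, p.1 * sin p.2)
    + pW22 μ u1 u2 P (p.1 * cos p.2, p.1 * sin p.2))) * hcs

lemma pW_sum_eq (μ : ℝ) (u1 u2 P : ℝ × ℝ → ℝ) (x : ℝ × ℝ)
    (hdiv : pd1 u1 x + pd2 u2 x = 0)
    (h1 : u1 x * pd1 u1 x + u2 x * pd2 u1 x
      = μ * (pd1 (pd1 u1) x + pd2 (pd2 u1) x) - pd1 P x)
    (h2 : u1 x * pd1 u2 x + u2 x * pd2 u2 x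
      = μ * (pd1 (pd1 u2) x + pd2 (pd2 u2) x) - pd2 P x) :
    pW11 μ u1 u2 P x + pW22 μ u1 u2 P x
      = μ * (pd1 u1 x ^ 2 + pd1 u2 x ^ 2 + pd2 u1 x ^ 2 + pd2 u2 x ^ 2) := by
  simp only [pW11, pW22, qq]
  linear_combination (-(u1 x)) * h1 + (-(u2 x)) * h2
    - ((u1 x ^ 2 + u2 x ^ 2) / 2 + P x) * hdiv

lemma isOpen_ann (a b : ℝ) : IsOpen (ann a b) := by
  have : ann a b = (fun x : ℝ × ℝ => x.1 ^ 2 + x.2 ^ 2) ⁻¹' (Set.Ioo (a ^ 2) (b ^ 2)) := rfl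
  rw [this]
  exact isOpen_Ioo.preimage (by fun_prop)

lemma polar_setIntegral (a b : ℝ) (ha : 0 < a) (hab : a < b) (g : ℝ × ℝ → ℝ) :
    ∫ x in ann a b, g x
      = ∫ p in Set.Ioo a b ×ˢ Set.Ioo (-π) π,
          p.1 * g (p.1 * Real.cos p.2, p.1 * Real.sin p.2) := by
  have hmeas : MeasurableSet (ann a b) := (isOpen_ann a b).measurableSet
  have hrectm : MeasurableSet (Set.Ioo a b ×ˢ Set.Ioo (-π) π) :=
    measurableSet_Ioo.prod measurableSet_Ioo
  have h0 := integral_comp_polarCoord_symm ((ann a b).indicator g)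
  rw [integral_indicator hmeas] at h0
  rw [← h0]
  have htarget : polarCoord.target = Set.Ioi (0:ℝ) ×ˢ Set.Ioo (-π) π := rfl
  rw [htarget]
  have hEq : Set.EqOn (fun p : ℝ × ℝ => p.1 • ((ann a b).indicator g (polarCoord.symm p)))
      ((Set.Ioo a b ×ˢ Set.Ioo (-π) π).indicator
        (fun p : ℝ × ℝ => p.1 * g (p.1 * Real.cos p.2, p.1 * Real.sin p.2)))
      (Set.Ioi (0:ℝ) ×ˢ Set.Ioo (-π) π) := by
    intro p hp
    have hp1 : 0 < p.1 := hp.1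
    have hΦ : polarCoord.symm p = (p.1 * Real.cos p.2, p.1 * Real.sin p.2) := rfl
    have hsq : (p.1 * Real.cos p.2) ^ 2 + (p.1 * Real.sin p.2) ^ 2 = p.1 ^ 2 := by
      linear_combination p.1 ^ 2 * Real.sin_sq_add_cos_sq p.2
    by_cases hm : p.1 ∈ Set.Ioo a b
    · have hann : polarCoord.symm p ∈ ann a b := by
        rw [hΦ]
        refine ⟨?_, ?_⟩ <;> rw [hsq]
        · exact pow_lt_pow_left₀ hm.1 ha.le two_ne_zero
        · exact pow_lt_pow_left₀ hm.2 (le_trans ha.le hm.1.le) two_ne_zero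
      have hrect : p ∈ Set.Ioo a b ×ˢ Set.Ioo (-π) π := ⟨hm, hp.2⟩
      rw [hΦ] at hann
      simp only [hΦ, Set.indicator_of_mem hann, Set.indicator_of_mem hrect, smul_eq_mul]
    · have hann : polarCoord.symm p ∉ ann a b := by
        rw [hΦ]
        intro hc
        obtain ⟨hc1, hc2⟩ := hc
        rw [hsq] at hc1 hc2
        exact hm ⟨lt_of_pow_lt_pow_left₀ 2 hp1.le hc1,
          lt_of_pow_lt_pow_left₀ 2 (by linarith) hc2⟩
      have hrect : p ∉ Set.Ioo a b ×ˢ Set.Ioo (-π) π := fun hc => hm hc.1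
      simp only [Set.indicator_of_notMem hann, Set.indicator_of_notMem hrect, smul_zero]
  rw [setIntegral_congr_fun (measurableSet_Ioi.prod measurableSet_Ioo) hEq,
    setIntegral_indicator hrectm,
    Set.inter_eq_self_of_subset_right
      (Set.prod_mono (Set.Ioo_subset_Ioi_self.trans ?_) subset_rfl)]
  · intro x hx
    exact lt_trans ha hx

lemma outer_pointwise (μ b c s U1 U2 A B C D q : ℝ) (hb : 0 < b)
    (hcs : s ^ 2 + c ^ 2 = 1)
    (htan : U1 * (b * c) + U2 * (b * s) = 0)
    (hder : (-(b * s) * A + (b * c) * C) * (b * c) + U1 * (-(b * s))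
      + ((-(b * s)) * B + (b * c) * D) * (b * s) + U2 * (b * c) = 0)
    (hcurl : B - C = 0) :
    b * ((μ * (U1 * A + U2 * B) - q * U1) * c + (μ * (U1 * C + U2 * D) - q * U2) * s)
      = -μ * (U1 * s - U2 * c) ^ 2 := by
  have e0 : U1 * c + U2 * s = 0 := by
    have h' : b * (U1 * c + U2 * s) = b * 0 := by linear_combination htan
    exact mul_left_cancel₀ hb.ne' h'
  have hU1 : U1 = (U1 * s - U2 * c) * s := by linear_combination c * e0 - U1 * hcs
  have hU2 : U2 = -((U1 * s - U2 * c) * c) := by linear_combination s * e0 - U2 * hcs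
  have hK : b * (-(s * c) * A + c ^ 2 * C - s ^ 2 * B + s * c * D) = U1 * s - U2 * c := by
    apply mul_left_cancel₀ hb.ne'
    linear_combination hder
  linear_combination (-(b * q)) * e0 + (b * μ * (c * A + s * C)) * hU1
    + (b * μ * (c * B + s * D)) * hU2 + (-(μ * (U1 * s - U2 * c))) * hK
    + (-(b * μ * (s ^ 2 + c ^ 2) * (U1 * s - U2 * c))) * hcurl

lemma inner_pointwise (μ α aa c s U1 U2 A B C D q : ℝ) (haa : 0 < aa)
    (hcs : s ^ 2 + c ^ 2 = 1)
    (htan : U1 * (aa * c) + U2 * (aa * s) = 0)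
    (hder : (-(aa * s) * A + (aa * c) * C) * (aa * c) + U1 * (-(aa * s))
      + ((-(aa * s)) * B + (aa * c) * D) * (aa * s) + U2 * (aa * c) = 0)
    (hslip : μ * (s * (-c) * (A + A) + s * (-s) * (B + C) + (-c) * (-c) * (C + B)
        + (-c) * (-s) * (D + D)) = α * (U1 * s + U2 * (-c))) :
    aa * ((μ * (U1 * A + U2 * B) - q * U1) * c + (μ * (U1 * C + U2 * D) - q * U2) * s)
      = (μ / aa - α) * aa * (U1 * s - U2 * c) ^ 2 := by
  have e0 : U1 * c + U2 * s = 0 := by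
    have h' : aa * (U1 * c + U2 * s) = aa * 0 := by linear_combination htan
    exact mul_left_cancel₀ haa.ne' h'
  have hU1 : U1 = (U1 * s - U2 * c) * s := by linear_combination c * e0 - U1 * hcs
  have hU2 : U2 = -((U1 * s - U2 * c) * c) := by linear_combination s * e0 - U2 * hcs
  have hK : aa * (-(s * c) * A + c ^ 2 * C - s ^ 2 * B + s * c * D) = U1 * s - U2 * c := by
    apply mul_left_cancel₀ haa.ne'
    linear_combination hder
  have hco : (μ / aa - α) * aa = μ - α * aa := by field_simp
  rw [hco]
  linear_combination (-(aa * q)) * e0 + (aa * μ * (c * A + s * C)) * hU1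
    + (aa * μ * (c * B + s * D)) * hU2 + (μ * (U1 * s - U2 * c)) * hK
    - (aa * (U1 * s - U2 * c)) * hslip

section Div
variable {a b μ : ℝ} {u1 u2 P : ℝ × ℝ → ℝ} {U : Set (ℝ × ℝ)}

lemma mem_U_polar (ha : 0 < a) (hUc : cann a b ⊆ U) {r : ℝ} (θ : ℝ)
    (hr : r ∈ Set.Icc a b) : ((r * Real.cos θ, r * Real.sin θ) : ℝ × ℝ) ∈ U := by
  apply hUc
  have hsq : (r * Real.cos θ) ^ 2 + (r * Real.sin θ) ^ 2 = r ^ 2 := by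
    linear_combination r ^ 2 * Real.sin_sq_add_cos_sq θ
  exact ⟨by rw [hsq]; exact pow_le_pow_left₀ ha.le hr.1 2,
    by rw [hsq]; exact pow_le_pow_left₀ (ha.le.trans hr.1) hr.2 2⟩

lemma annulus_divergence (ha : 0 < a) (hab : a < b) (hU : IsOpen U) (hUc : cann a b ⊆ U)
    (hu1 : ContDiffOn ℝ 2 u1 U) (hu2 : ContDiffOn ℝ 2 u2 U) (hP : ContDiffOn ℝ 1 P U)
    (hdiv : ∀ x ∈ ann a b, pd1 u1 x + pd2 u2 x = 0)
    (h1 : ∀ x ∈ ann a b, u1 x * pd1 u1 x + u2 x * pd2 u1 x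
      = μ * (pd1 (pd1 u1) x + pd2 (pd2 u1) x) - pd1 P x)
    (h2 : ∀ x ∈ ann a b, u1 x * pd1 u2 x + u2 x * pd2 u2 x
      = μ * (pd1 (pd1 u2) x + pd2 (pd2 u2) x) - pd2 P x) :
    ∫ x in ann a b, μ * (pd1 u1 x ^ 2 + pd1 u2 x ^ 2 + pd2 u1 x ^ 2 + pd2 u2 x ^ 2)
      = (∫ θ in (-π)..π, b * (WW1 μ u1 u2 P (b * Real.cos θ, b * Real.sin θ) * Real.cos θ
            + WW2 μ u1 u2 P (b * Real.cos θ, b * Real.sin θ) * Real.sin θ))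
        - ∫ θ in (-π)..π, a * (WW1 μ u1 u2 P (a * Real.cos θ, a * Real.sin θ) * Real.cos θ
            + WW2 μ u1 u2 P (a * Real.cos θ, a * Real.sin θ) * Real.sin θ) := by
  have hππ : -π < π := by linarith [Real.pi_pos]
  -- continuity infrastructure
  have cu1 : ContinuousOn u1 U := hu1.continuousOn
  have cu2 : ContinuousOn u2 U := hu2.continuousOn
  have cP : ContinuousOn P U := hP.continuousOn
  have cA : ContinuousOn (pd1 u1) U := pd1_continuousOn (hu1.of_le one_le_two) hU
  have cB : ContinuousOn (pd1 u2) U := pd1_continuousOn (hu2.of_le one_le_two) hU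
  have cC : ContinuousOn (pd2 u1) U := pd2_continuousOn (hu1.of_le one_le_two) hU
  have cD : ContinuousOn (pd2 u2) U := pd2_continuousOn (hu2.of_le one_le_two) hU
  have cP1 : ContinuousOn (pd1 P) U := pd1_continuousOn hP hU
  have cP2 : ContinuousOn (pd2 P) U := pd2_continuousOn hP hU
  have cA1 : ContinuousOn (pd1 (pd1 u1)) U := pd1_continuousOn (pd1_contDiffOn hu1 hU) hU
  have cA2 : ContinuousOn (pd2 (pd1 u1)) U := pd2_continuousOn (pd1_contDiffOn hu1 hU) hU
  have cB1 : ContinuousOn (pd1 (pd1 u2)) U := pd1_continuousOn (pd1_contDiffOn hu2 hU) hU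
  have cB2 : ContinuousOn (pd2 (pd1 u2)) U := pd2_continuousOn (pd1_contDiffOn hu2 hU) hU
  have cC1 : ContinuousOn (pd1 (pd2 u1)) U := pd1_continuousOn (pd2_contDiffOn hu1 hU) hU
  have cC2 : ContinuousOn (pd2 (pd2 u1)) U := pd2_continuousOn (pd2_contDiffOn hu1 hU) hU
  have cD1 : ContinuousOn (pd1 (pd2 u2)) U := pd1_continuousOn (pd2_contDiffOn hu2 hU) hU
  have cD2 : ContinuousOn (pd2 (pd2 u2)) U := pd2_continuousOn (pd2_contDiffOn hu2 hU) hU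
  have cq : ContinuousOn (qq u1 u2 P) U := by unfold qq; fun_prop
  have cW1 : ContinuousOn (WW1 μ u1 u2 P) U := by unfold WW1 qq; fun_prop
  have cW2 : ContinuousOn (WW2 μ u1 u2 P) U := by unfold WW2 qq; fun_prop
  have cw11 : ContinuousOn (pW11 μ u1 u2 P) U := by unfold pW11 qq; fun_prop
  have cw12 : ContinuousOn (pW12 μ u1 u2 P) U := by unfold pW12 qq; fun_prop
  have cw21 : ContinuousOn (pW21 μ u1 u2 P) U := by unfold pW21 qq; fun_prop
  have cw22 : ContinuousOn (pW22 μ u1 u2 P) U := by unfold pW22 qq; fun_prop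
  have hΦc : Continuous (fun p : ℝ × ℝ => ((p.1 * Real.cos p.2, p.1 * Real.sin p.2) : ℝ × ℝ)) :=
    by fun_prop
  have hmaps : Set.MapsTo (fun p : ℝ × ℝ => ((p.1 * Real.cos p.2, p.1 * Real.sin p.2) : ℝ × ℝ))
      (Set.Icc a b ×ˢ (Set.univ : Set ℝ)) U := fun p hp => mem_U_polar ha hUc p.2 hp.1
  have compCont : ∀ {f : ℝ × ℝ → ℝ}, ContinuousOn f U →
      ContinuousOn (fun p : ℝ × ℝ => f (p.1 * Real.cos p.2, p.1 * Real.sin p.2))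
        (Set.Icc a b ×ˢ (Set.univ : Set ℝ)) :=
    fun hf => hf.comp hΦc.continuousOn hmaps
  have ccos : Continuous (fun p : ℝ × ℝ => Real.cos p.2) := by fun_prop
  have csin : Continuous (fun p : ℝ × ℝ => Real.sin p.2) := by fun_prop
  have contEE1 : ContinuousOn (EE1 μ u1 u2 P) (Set.Icc a b ×ˢ (Set.univ : Set ℝ)) := by
    unfold EE1
    exact (((compCont cW1).mul ccos.continuousOn).add
        ((compCont cW2).mul csin.continuousOn)).add
      (continuous_fst.continuousOn.mul
        ((((ccos.continuousOn.mul (compCont cw11)).add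
            (csin.continuousOn.mul (compCont cw12))).mul ccos.continuousOn).add
          (((ccos.continuousOn.mul (compCont cw21)).add
            (csin.continuousOn.mul (compCont cw22))).mul csin.continuousOn)))
  have contEE2 : ContinuousOn (EE2 μ u1 u2 P) (Set.Icc a b ×ˢ (Set.univ : Set ℝ)) := by
    unfold EE2
    refine ContinuousOn.sub (ContinuousOn.add (ContinuousOn.sub (ContinuousOn.neg ?_) ?_) ?_) ?_
    · exact (((continuous_fst.mul (csin)).neg.continuousOn.mul (compCont cw11)).add
        ((continuous_fst.mul ccos).continuousOn.mul (compCont cw12))).mul csin.continuousOn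
    · exact (compCont cW1).mul ccos.continuousOn
    · exact (((continuous_fst.mul csin).neg.continuousOn.mul (compCont cw21)).add
        ((continuous_fst.mul ccos).continuousOn.mul (compCont cw22))).mul ccos.continuousOn
    · exact (compCont cW2).mul csin.continuousOn
  have hKcpt : IsCompact (Set.Icc a b ×ˢ Set.Icc (-π) π) := isCompact_Icc.prod isCompact_Icc
  have hsubK : (Set.Ioo a b ×ˢ Set.Ioo (-π) π) ⊆ Set.Icc a b ×ˢ Set.Icc (-π) π :=
    Set.prod_mono Set.Ioo_subset_Icc_self Set.Ioo_subset_Icc_self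
  have hsubS : (Set.Icc a b ×ˢ Set.Icc (-π) π) ⊆ Set.Icc a b ×ˢ (Set.univ : Set ℝ) :=
    Set.prod_mono subset_rfl (Set.subset_univ _)
  have intEE1 : IntegrableOn (EE1 μ u1 u2 P) (Set.Ioo a b ×ˢ Set.Ioo (-π) π) :=
    ((contEE1.mono hsubS).integrableOn_compact hKcpt).mono_set hsubK
  have intEE2 : IntegrableOn (EE2 μ u1 u2 P) (Set.Ioo a b ×ˢ Set.Ioo (-π) π) :=
    ((contEE2.mono hsubS).integrableOn_compact hKcpt).mono_set hsubK
  have hrectm : MeasurableSet (Set.Ioo a b ×ˢ Set.Ioo (-π) π) :=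
    measurableSet_Ioo.prod measurableSet_Ioo
  -- step 1 : polar change of variables and pointwise divergence identity
  have step1 : ∫ x in ann a b, μ * (pd1 u1 x ^ 2 + pd1 u2 x ^ 2 + pd2 u1 x ^ 2 + pd2 u2 x ^ 2)
      = ∫ p in Set.Ioo a b ×ˢ Set.Ioo (-π) π, (EE1 μ u1 u2 P p + EE2 μ u1 u2 P p) := by
    rw [polar_setIntegral a b ha hab]
    apply setIntegral_congr_fun hrectm
    intro p hp
    dsimp only
    have hx : ((p.1 * Real.cos p.2, p.1 * Real.sin p.2) : ℝ × ℝ) ∈ ann a b := by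
      have hsq : (p.1 * Real.cos p.2) ^ 2 + (p.1 * Real.sin p.2) ^ 2 = p.1 ^ 2 := by
        linear_combination p.1 ^ 2 * Real.sin_sq_add_cos_sq p.2
      exact ⟨by rw [hsq]; exact pow_lt_pow_left₀ hp.1.1 ha.le two_ne_zero,
        by rw [hsq]; exact pow_lt_pow_left₀ hp.1.2 (ha.le.trans hp.1.1.le) two_ne_zero⟩
    rw [EE_sum, pW_sum_eq μ u1 u2 P _ (hdiv _ hx) (h1 _ hx) (h2 _ hx)]
  rw [step1]
  -- split the integral
  rw [integral_add intEE1 intEE2]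
  -- the EE2 integral vanishes
  have hEE2zero : ∫ p in Set.Ioo a b ×ˢ Set.Ioo (-π) π, EE2 μ u1 u2 P p = 0 := by
    rw [Measure.volume_eq_prod, ← Measure.prod_restrict,
      integral_prod _ (by rwa [Measure.prod_restrict, ← Measure.volume_eq_prod])]
    have hinner : ∀ r ∈ Set.Ioo a b, (∫ θ in Set.Ioo (-π) π, EE2 μ u1 u2 P (r, θ)) = 0 := by
      intro r hr
      have hrI : r ∈ Set.Icc a b := Set.Ioo_subset_Icc_self hr
      have hcont : Continuous (fun θ => EE2 μ u1 u2 P (r, θ)) :=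
        (contEE2.comp_continuous (continuous_const.prodMk continuous_id)
          (fun θ => ⟨hrI, Set.mem_univ θ⟩))
      rw [← integral_Ioc_eq_integral_Ioo, ← intervalIntegral.integral_of_le hππ.le]
      rw [intervalIntegral.integral_eq_sub_of_hasDerivAt
        (fun θ _ => hasDerivAt_V2 μ u1 u2 P hU hu1 hu2 hP (mem_U_polar ha hUc θ hrI))
        (hcont.intervalIntegrable _ _)]
      simp [Real.sin_pi, Real.cos_pi, Real.sin_neg, Real.cos_neg]
    calc (∫ r in Set.Ioo a b, ∫ θ in Set.Ioo (-π) π, EE2 μ u1 u2 P (r, θ))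
        = ∫ r in Set.Ioo a b, (0 : ℝ) :=
          setIntegral_congr_fun measurableSet_Ioo (fun r hr => hinner r hr)
      _ = 0 := by simp
  rw [hEE2zero, add_zero]
  -- the EE1 integral gives the boundary terms
  have hVcont : ∀ ρ ∈ Set.Icc a b, Continuous (fun θ : ℝ =>
      ρ * (WW1 μ u1 u2 P (ρ * Real.cos θ, ρ * Real.sin θ) * Real.cos θ
        + WW2 μ u1 u2 P (ρ * Real.cos θ, ρ * Real.sin θ) * Real.sin θ)) := by
    intro ρ hρ
    have hW1c : Continuous (fun θ : ℝ => WW1 μ u1 u2 P (ρ * Real.cos θ, ρ * Real.sin θ)) :=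
      cW1.comp_continuous (by fun_prop) (fun θ => mem_U_polar ha hUc θ hρ)
    have hW2c : Continuous (fun θ : ℝ => WW2 μ u1 u2 P (ρ * Real.cos θ, ρ * Real.sin θ)) :=
      cW2.comp_continuous (by fun_prop) (fun θ => mem_U_polar ha hUc θ hρ)
    exact continuous_const.mul ((hW1c.mul Real.continuous_cos).add (hW2c.mul Real.continuous_sin))
  rw [Measure.volume_eq_prod, ← Measure.prod_restrict,
    integral_prod_symm _ (by rwa [Measure.prod_restrict, ← Measure.volume_eq_prod])]
  have hinner1 : ∀ θ : ℝ, (∫ r in Set.Ioo a b, EE1 μ u1 u2 P (r, θ))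
      = b * (WW1 μ u1 u2 P (b * Real.cos θ, b * Real.sin θ) * Real.cos θ
            + WW2 μ u1 u2 P (b * Real.cos θ, b * Real.sin θ) * Real.sin θ)
        - a * (WW1 μ u1 u2 P (a * Real.cos θ, a * Real.sin θ) * Real.cos θ
            + WW2 μ u1 u2 P (a * Real.cos θ, a * Real.sin θ) * Real.sin θ) := by
    intro θ
    have hcont : ContinuousOn (fun r => EE1 μ u1 u2 P (r, θ)) (Set.Icc a b) :=
      contEE1.comp ((continuous_id.prodMk continuous_const).continuousOn)
        (fun r hr => ⟨hr, Set.mem_univ θ⟩)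
    have hii : IntervalIntegrable (fun r => EE1 μ u1 u2 P (r, θ)) volume a b := by
      apply ContinuousOn.intervalIntegrable
      rwa [Set.uIcc_of_le hab.le]
    rw [← integral_Ioc_eq_integral_Ioo, ← intervalIntegral.integral_of_le hab.le,
      intervalIntegral.integral_eq_sub_of_hasDerivAt
        (fun r hr => hasDerivAt_V1 μ u1 u2 P hU hu1 hu2 hP
          (mem_U_polar ha hUc θ (by rwa [Set.uIcc_of_le hab.le] at hr))) hii]
  calc (∫ θ in Set.Ioo (-π) π, ∫ r in Set.Ioo a b, EE1 μ u1 u2 P (r, θ))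
      = ∫ θ in Set.Ioo (-π) π,
          (b * (WW1 μ u1 u2 P (b * Real.cos θ, b * Real.sin θ) * Real.cos θ
            + WW2 μ u1 u2 P (b * Real.cos θ, b * Real.sin θ) * Real.sin θ)
          - a * (WW1 μ u1 u2 P (a * Real.cos θ, a * Real.sin θ) * Real.cos θ
            + WW2 μ u1 u2 P (a * Real.cos θ, a * Real.sin θ) * Real.sin θ)) :=
        setIntegral_congr_fun measurableSet_Ioo (fun θ _ => hinner1 θ)
    _ = ∫ θ in (-π)..π,
          (b * (WW1 μ u1 u2 P (b * Real.cos θ, b * Real.sin θ) * Real.cos θ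
            + WW2 μ u1 u2 P (b * Real.cos θ, b * Real.sin θ) * Real.sin θ)
          - a * (WW1 μ u1 u2 P (a * Real.cos θ, a * Real.sin θ) * Real.cos θ
            + WW2 μ u1 u2 P (a * Real.cos θ, a * Real.sin θ) * Real.sin θ)) := by
        rw [intervalIntegral.integral_of_le hππ.le, integral_Ioc_eq_integral_Ioo]
    _ = _ := by
        apply intervalIntegral.integral_sub
        · exact ((hVcont b ⟨hab.le, le_rfl⟩).intervalIntegrable _ _)
        · exact ((hVcont a ⟨le_rfl, hab.le⟩).intervalIntegrable _ _)

end Div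

section Bdry
variable {a b μ α : ℝ} {u1 u2 P : ℝ × ℝ → ℝ} {U : Set (ℝ × ℝ)}

lemma tangency_deriv (hU : IsOpen U) (hu1 : ContDiffOn ℝ 2 u1 U) (hu2 : ContDiffOn ℝ 2 u2 U)
    (ρ : ℝ) (hmem : ∀ θ : ℝ, ((ρ * Real.cos θ, ρ * Real.sin θ) : ℝ × ℝ) ∈ U)
    (h0 : ∀ θ : ℝ, u1 (ρ * Real.cos θ, ρ * Real.sin θ) * (ρ * Real.cos θ)
      + u2 (ρ * Real.cos θ, ρ * Real.sin θ) * (ρ * Real.sin θ) = 0) (θ : ℝ) :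
    (-(ρ * Real.sin θ) * pd1 u1 (ρ * Real.cos θ, ρ * Real.sin θ)
        + (ρ * Real.cos θ) * pd2 u1 (ρ * Real.cos θ, ρ * Real.sin θ)) * (ρ * Real.cos θ)
      + u1 (ρ * Real.cos θ, ρ * Real.sin θ) * (-(ρ * Real.sin θ))
      + ((-(ρ * Real.sin θ)) * pd1 u2 (ρ * Real.cos θ, ρ * Real.sin θ)
        + (ρ * Real.cos θ) * pd2 u2 (ρ * Real.cos θ, ρ * Real.sin θ)) * (ρ * Real.sin θ)
      + u2 (ρ * Real.cos θ, ρ * Real.sin θ) * (ρ * Real.cos θ) = 0 := by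
  have h₁ : HasDerivAt (fun ψ : ℝ => ρ * Real.cos ψ) (-(ρ * Real.sin θ)) θ := by
    have := (Real.hasDerivAt_cos θ).const_mul ρ
    convert this using 1
    · rfl
    · rfl
    · ring
  have h₂ : HasDerivAt (fun ψ : ℝ => ρ * Real.sin ψ) (ρ * Real.cos θ) θ :=
    (Real.hasDerivAt_sin θ).const_mul ρ
  have Hu1 := hasDerivAt_comp_curve h₁ h₂
    (diffAt_of_contDiffOn (hu1.of_le one_le_two) hU (hmem θ))
  have Hu2 := hasDerivAt_comp_curve h₁ h₂
    (diffAt_of_contDiffOn (hu2.of_le one_le_two) hU (hmem θ))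
  have comb := (Hu1.mul h₁).add (Hu2.mul h₂)
  have hzero : HasDerivAt (fun ψ : ℝ => u1 (ρ * Real.cos ψ, ρ * Real.sin ψ) * (ρ * Real.cos ψ)
      + u2 (ρ * Real.cos ψ, ρ * Real.sin ψ) * (ρ * Real.sin ψ)) 0 θ := by
    have heq : (fun ψ : ℝ => u1 (ρ * Real.cos ψ, ρ * Real.sin ψ) * (ρ * Real.cos ψ)
        + u2 (ρ * Real.cos ψ, ρ * Real.sin ψ) * (ρ * Real.sin ψ)) = fun _ => (0 : ℝ) :=
      funext h0
    rw [heq]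
    exact hasDerivAt_const θ 0
  have huniq := comb.unique hzero
  linear_combination huniq

lemma outer_eval (ha : 0 < a) (hab : a < b) (hU : IsOpen U) (hUc : cann a b ⊆ U)
    (hu1 : ContDiffOn ℝ 2 u1 U) (hu2 : ContDiffOn ℝ 2 u2 U) (hP : ContDiffOn ℝ 1 P U)
    (htanb : ∀ θ : ℝ, u1 (b * Real.cos θ, b * Real.sin θ) * (b * Real.cos θ)
      + u2 (b * Real.cos θ, b * Real.sin θ) * (b * Real.sin θ) = 0)
    (hcurlb : ∀ θ : ℝ, pd1 u2 (b * Real.cos θ, b * Real.sin θ)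
      - pd2 u1 (b * Real.cos θ, b * Real.sin θ) = 0) :
    ∫ θ in (-π)..π, b * (WW1 μ u1 u2 P (b * Real.cos θ, b * Real.sin θ) * Real.cos θ
        + WW2 μ u1 u2 P (b * Real.cos θ, b * Real.sin θ) * Real.sin θ)
      = -(μ / b) * ∫ θ in (0:ℝ)..(2 * π),
          (u1 (b * Real.cos θ, b * Real.sin θ) * Real.sin θ
            - u2 (b * Real.cos θ, b * Real.sin θ) * Real.cos θ) ^ 2 * b := by
  have hb : 0 < b := ha.trans hab
  have hmem : ∀ θ : ℝ, ((b * Real.cos θ, b * Real.sin θ) : ℝ × ℝ) ∈ U :=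
    fun θ => mem_U_polar ha hUc θ ⟨hab.le, le_rfl⟩
  have hpt : ∀ θ : ℝ, b * (WW1 μ u1 u2 P (b * Real.cos θ, b * Real.sin θ) * Real.cos θ
      + WW2 μ u1 u2 P (b * Real.cos θ, b * Real.sin θ) * Real.sin θ)
      = -μ * (u1 (b * Real.cos θ, b * Real.sin θ) * Real.sin θ
          - u2 (b * Real.cos θ, b * Real.sin θ) * Real.cos θ) ^ 2 := by
    intro θ
    have := outer_pointwise μ b (Real.cos θ) (Real.sin θ)
      (u1 (b * Real.cos θ, b * Real.sin θ)) (u2 (b * Real.cos θ, b * Real.sin θ))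
      (pd1 u1 (b * Real.cos θ, b * Real.sin θ)) (pd1 u2 (b * Real.cos θ, b * Real.sin θ))
      (pd2 u1 (b * Real.cos θ, b * Real.sin θ)) (pd2 u2 (b * Real.cos θ, b * Real.sin θ))
      (qq u1 u2 P (b * Real.cos θ, b * Real.sin θ)) hb (Real.sin_sq_add_cos_sq θ)
      (htanb θ) (tangency_deriv hU hu1 hu2 b hmem htanb θ) (hcurlb θ)
    simp only [WW1, WW2]
    linear_combination this
  rw [intervalIntegral.integral_congr (g := fun θ =>
    -μ * (u1 (b * Real.cos θ, b * Real.sin θ) * Real.sin θ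
      - u2 (b * Real.cos θ, b * Real.sin θ) * Real.cos θ) ^ 2) (fun θ _ => hpt θ)]
  have hper : Function.Periodic (fun θ : ℝ =>
      (u1 (b * Real.cos θ, b * Real.sin θ) * Real.sin θ
        - u2 (b * Real.cos θ, b * Real.sin θ) * Real.cos θ) ^ 2 * b) (2 * π) := by
    intro θ
    simp [Real.cos_add_two_pi, Real.sin_add_two_pi]
  have hshift := hper.intervalIntegral_add_eq 0 (-π)
  rw [zero_add, show -π + 2 * π = π by ring] at hshift
  rw [hshift, ← intervalIntegral.integral_const_mul]
  apply intervalIntegral.integral_congr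
  intro θ _
  field_simp

lemma inner_eval (ha : 0 < a) (hab : a < b) (hU : IsOpen U) (hUc : cann a b ⊆ U)
    (hu1 : ContDiffOn ℝ 2 u1 U) (hu2 : ContDiffOn ℝ 2 u2 U) (hP : ContDiffOn ℝ 1 P U)
    (htana : ∀ θ : ℝ, u1 (a * Real.cos θ, a * Real.sin θ) * (a * Real.cos θ)
      + u2 (a * Real.cos θ, a * Real.sin θ) * (a * Real.sin θ) = 0)
    (hslipa : ∀ θ : ℝ,
      μ * (Real.sin θ * (-Real.cos θ) * (pd1 u1 (a * Real.cos θ, a * Real.sin θ)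
            + pd1 u1 (a * Real.cos θ, a * Real.sin θ))
        + Real.sin θ * (-Real.sin θ) * (pd1 u2 (a * Real.cos θ, a * Real.sin θ)
            + pd2 u1 (a * Real.cos θ, a * Real.sin θ))
        + (-Real.cos θ) * (-Real.cos θ) * (pd2 u1 (a * Real.cos θ, a * Real.sin θ)
            + pd1 u2 (a * Real.cos θ, a * Real.sin θ))
        + (-Real.cos θ) * (-Real.sin θ) * (pd2 u2 (a * Real.cos θ, a * Real.sin θ)
            + pd2 u2 (a * Real.cos θ, a * Real.sin θ)))
      = α * (u1 (a * Real.cos θ, a * Real.sin θ) * Real.sin θ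
          + u2 (a * Real.cos θ, a * Real.sin θ) * (-Real.cos θ))) :
    ∫ θ in (-π)..π, a * (WW1 μ u1 u2 P (a * Real.cos θ, a * Real.sin θ) * Real.cos θ
        + WW2 μ u1 u2 P (a * Real.cos θ, a * Real.sin θ) * Real.sin θ)
      = (μ / a - α) * ∫ θ in (0:ℝ)..(2 * π),
          (u1 (a * Real.cos θ, a * Real.sin θ) * Real.sin θ
            - u2 (a * Real.cos θ, a * Real.sin θ) * Real.cos θ) ^ 2 * a := by
  have hmem : ∀ θ : ℝ, ((a * Real.cos θ, a * Real.sin θ) : ℝ × ℝ) ∈ U :=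
    fun θ => mem_U_polar ha hUc θ ⟨le_rfl, hab.le⟩
  have hpt : ∀ θ : ℝ, a * (WW1 μ u1 u2 P (a * Real.cos θ, a * Real.sin θ) * Real.cos θ
      + WW2 μ u1 u2 P (a * Real.cos θ, a * Real.sin θ) * Real.sin θ)
      = (μ / a - α) * ((u1 (a * Real.cos θ, a * Real.sin θ) * Real.sin θ
          - u2 (a * Real.cos θ, a * Real.sin θ) * Real.cos θ) ^ 2 * a) := by
    intro θ
    have := inner_pointwise μ α a (Real.cos θ) (Real.sin θ)
      (u1 (a * Real.cos θ, a * Real.sin θ)) (u2 (a * Real.cos θ, a * Real.sin θ))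
      (pd1 u1 (a * Real.cos θ, a * Real.sin θ)) (pd1 u2 (a * Real.cos θ, a * Real.sin θ))
      (pd2 u1 (a * Real.cos θ, a * Real.sin θ)) (pd2 u2 (a * Real.cos θ, a * Real.sin θ))
      (qq u1 u2 P (a * Real.cos θ, a * Real.sin θ)) ha (Real.sin_sq_add_cos_sq θ)
      (htana θ) (tangency_deriv hU hu1 hu2 a hmem htana θ) (hslipa θ)
    simp only [WW1, WW2]
    linear_combination this
  rw [intervalIntegral.integral_congr (g := fun θ => (μ / a - α)
    * ((u1 (a * Real.cos θ, a * Real.sin θ) * Real.sin θ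
      - u2 (a * Real.cos θ, a * Real.sin θ) * Real.cos θ) ^ 2 * a)) (fun θ _ => hpt θ)]
  have hper : Function.Periodic (fun θ : ℝ =>
      (u1 (a * Real.cos θ, a * Real.sin θ) * Real.sin θ
        - u2 (a * Real.cos θ, a * Real.sin θ) * Real.cos θ) ^ 2 * a) (2 * π) := by
    intro θ
    simp [Real.cos_add_two_pi, Real.sin_add_two_pi]
  have hshift := hper.intervalIntegral_add_eq 0 (-π)
  rw [zero_add, show -π + 2 * π = π by ring] at hshift
  rw [hshift, ← intervalIntegral.integral_const_mul]

end Bdry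

section Part2

lemma periodic_zero_of_integral_zero (q : ℝ → ℝ) (hq : Continuous q) (hnn : ∀ θ, 0 ≤ q θ)
    (hper : Function.Periodic q (2 * π)) (hint : ∫ θ in (0:ℝ)..(2 * π), q θ = 0) :
    ∀ θ, q θ = 0 := by
  intro θ₀
  by_contra h
  have hpos : 0 < q θ₀ := (hnn θ₀).lt_of_ne (Ne.symm h)
  have hshift := hper.intervalIntegral_add_eq (θ₀ - π) 0
  rw [zero_add, show θ₀ - π + 2 * π = θ₀ + π by ring, hint] at hshift
  have hev : q ⁻¹' Set.Ioi (q θ₀ / 2) ∈ nhds θ₀ :=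
    hq.continuousAt (Ioi_mem_nhds (by linarith))
  obtain ⟨δ, hδ, hball⟩ := Metric.mem_nhds_iff.mp hev
  set δ' : ℝ := min (δ / 2) (π / 2) with hδ'def
  have hδ'pos : 0 < δ' := lt_min (by linarith) (by linarith [Real.pi_pos])
  have hδ'δ : δ' < δ := lt_of_le_of_lt (min_le_left _ _) (by linarith)
  have hδ'π : δ' ≤ π := le_trans (min_le_right _ _) (by linarith [Real.pi_pos])
  have hmono : ∫ θ in (θ₀ - δ')..(θ₀ + δ'), q θ ≤ ∫ θ in (θ₀ - π)..(θ₀ + π), q θ :=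
    intervalIntegral.integral_mono_interval (by linarith) (by linarith) (by linarith)
      (Filter.Eventually.of_forall fun x => hnn x) (hq.intervalIntegrable _ _)
  have hconst : ∫ θ in (θ₀ - δ')..(θ₀ + δ'), (q θ₀ / 2) ≤ ∫ θ in (θ₀ - δ')..(θ₀ + δ'), q θ := by
    apply intervalIntegral.integral_mono_on (by linarith) (intervalIntegrable_const)
      (hq.intervalIntegrable _ _)
    intro ψ hψ
    have hmem : ψ ∈ Metric.ball θ₀ δ := by
      rw [Metric.mem_ball, Real.dist_eq]
      rw [Set.mem_Icc] at hψ
      have habs : |ψ - θ₀| ≤ δ' := abs_le.mpr ⟨by linarith [hψ.1], by linarith [hψ.2]⟩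
      exact lt_of_le_of_lt habs hδ'δ
    exact le_of_lt (hball hmem)
  rw [intervalIntegral.integral_const] at hconst
  simp only [smul_eq_mul] at hconst
  nlinarith [hshift, hmono, hconst]

end Part2

section Part2b

lemma circle_rep {ρ : ℝ} (hρ : 0 < ρ) {x : ℝ × ℝ} (hx : x.1 ^ 2 + x.2 ^ 2 = ρ ^ 2) :
    ∃ θ : ℝ, x = (ρ * Real.cos θ, ρ * Real.sin θ) := by
  set z : ℂ := x.1 + x.2 * Complex.I with hz
  have habs : ‖z‖ = ρ := by
    rw [hz, Complex.norm_def, Complex.normSq_add_mul_I, hx]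
    exact Real.sqrt_sq hρ.le
  have hZ := Complex.norm_mul_cos_add_sin_mul_I z
  rw [habs] at hZ
  refine ⟨Complex.arg z, ?_⟩
  have hre := congrArg Complex.re hZ
  have him := congrArg Complex.im hZ
  simp [hz] at hre him
  refine Prod.ext ?_ ?_
  · simpa [hz, Complex.cos_ofReal_re] using hre.symm
  · simpa [hz, Complex.sin_ofReal_re] using him.symm

lemma eqzero_of_setIntegral_zero {f : ℝ × ℝ → ℝ} {s : Set (ℝ × ℝ)} (hs : IsOpen s)
    (hf : ContinuousOn f s) (hnn : ∀ x ∈ s, 0 ≤ f x) (hint : IntegrableOn f s)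
    (hzero : ∫ x in s, f x = 0) : ∀ x ∈ s, f x = 0 := by
  intro x₀ hx₀
  by_contra h
  have hpos : 0 < f x₀ := (hnn x₀ hx₀).lt_of_ne (Ne.symm h)
  have hc : ContinuousAt f x₀ := hf.continuousAt (hs.mem_nhds hx₀)
  have hev : f ⁻¹' Set.Ioi (f x₀ / 2) ∈ nhds x₀ := hc (Ioi_mem_nhds (by linarith))
  obtain ⟨ε, hε, hball⟩ := Metric.mem_nhds_iff.mp (Filter.inter_mem hev (hs.mem_nhds hx₀))
  have hsub : Metric.ball x₀ ε ⊆ s := fun y hy => (hball hy).2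
  have h1 : ∫ x in Metric.ball x₀ ε, f x ≤ ∫ x in s, f x := by
    apply setIntegral_mono_set hint
    · exact (ae_restrict_iff' hs.measurableSet).mpr (Filter.Eventually.of_forall hnn)
    · exact HasSubset.Subset.eventuallyLE hsub
  have hballlt : volume (Metric.ball x₀ ε) < ⊤ := measure_ball_lt_top
  have h2 : (volume (Metric.ball x₀ ε)).toReal * (f x₀ / 2)
      ≤ ∫ x in Metric.ball x₀ ε, f x := by
    have := setIntegral_mono_on (integrableOn_const hballlt.ne)
      (hint.mono_set hsub) measurableSet_ball
      (fun y hy => le_of_lt ((hball hy).1 : f x₀ / 2 < f y))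
    rwa [setIntegral_const, smul_eq_mul] at this
  have hvol : 0 < (volume (Metric.ball x₀ ε)).toReal :=
    ENNReal.toReal_pos (Metric.measure_ball_pos volume x₀ hε).ne' hballlt.ne
  nlinarith

lemma ray_value {a b : ℝ} {f : ℝ × ℝ → ℝ} {U : Set (ℝ × ℝ)} (ha : 0 < a) (hab : a < b)
    (hU : IsOpen U) (hUc : cann a b ⊆ U) (hf : ContDiffOn ℝ 1 f U)
    (hpd1 : ∀ x ∈ ann a b, pd1 f x = 0) (hpd2 : ∀ x ∈ ann a b, pd2 f x = 0)
    {ρ θ : ℝ} (hρa : a < ρ) (hρb : ρ < b) :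
    f (ρ * Real.cos θ, ρ * Real.sin θ) = f (b * Real.cos θ, b * Real.sin θ) := by
  set g : ℝ → ℝ := fun r => f (r * Real.cos θ, r * Real.sin θ) with hg
  have hmemann : ∀ r : ℝ, a < r → r < b → ((r * Real.cos θ, r * Real.sin θ) : ℝ × ℝ) ∈ ann a b := by
    intro r h1 h2
    have hsq : (r * Real.cos θ) ^ 2 + (r * Real.sin θ) ^ 2 = r ^ 2 := by
      linear_combination r ^ 2 * Real.sin_sq_add_cos_sq θ
    exact ⟨by rw [hsq]; exact pow_lt_pow_left₀ h1 ha.le two_ne_zero,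
      by rw [hsq]; exact pow_lt_pow_left₀ h2 (ha.le.trans h1.le) two_ne_zero⟩
  have hconst : ∀ r ∈ Set.Ico ρ b, g r = g ρ := by
    intro r hr
    have hder : ∀ s ∈ Set.uIcc ρ r, HasDerivAt g 0 s := by
      intro s hs
      rw [Set.uIcc_of_le hr.1] at hs
      have hsann : ((s * Real.cos θ, s * Real.sin θ) : ℝ × ℝ) ∈ ann a b :=
        hmemann s (lt_of_lt_of_le hρa hs.1) (lt_of_le_of_lt hs.2 hr.2)
      have h₁ : HasDerivAt (fun t : ℝ => t * Real.cos θ) (Real.cos θ) s := hasDerivAt_mul_const _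
      have h₂ : HasDerivAt (fun t : ℝ => t * Real.sin θ) (Real.sin θ) s := hasDerivAt_mul_const _
      have := hasDerivAt_comp_curve h₁ h₂
        (diffAt_of_contDiffOn hf hU (hUc (Set.mem_of_mem_of_subset hsann (by
          intro y hy; exact ⟨hy.1.le, hy.2.le⟩))))
      rwa [hpd1 _ hsann, hpd2 _ hsann, mul_zero, mul_zero, add_zero] at this
    have hFTC := intervalIntegral.integral_eq_sub_of_hasDerivAt hder
      (intervalIntegrable_const (c := (0:ℝ)))
    rw [intervalIntegral.integral_const] at hFTC
    simp only [smul_eq_mul, mul_zero] at hFTC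
    linarith [hFTC]
  have hgc : ContinuousOn g (Set.Icc ρ b) := by
    apply hf.continuousOn.comp (by fun_prop)
    intro r hr
    exact mem_U_polar ha hUc θ ⟨hρa.le.trans hr.1, hr.2⟩
  have T1 : Filter.Tendsto g (nhdsWithin b (Set.Ico ρ b)) (nhds (g b)) :=
    ((hgc b ⟨hρb.le, le_rfl⟩).mono_left (nhdsWithin_mono b Set.Ico_subset_Icc_self))
  have T2 : Filter.Tendsto g (nhdsWithin b (Set.Ico ρ b)) (nhds (g ρ)) := by
    apply Filter.Tendsto.congr' _ tendsto_const_nhds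
    exact eventually_nhdsWithin_of_forall (fun r hr => (hconst r hr).symm)
  haveI := right_nhdsWithin_Ico_neBot hρb
  exact (tendsto_nhds_unique T2 T1)

end Part2b

set_option maxHeartbeats 2000000 in
/-- energy identity for steady solutions of the Navier–Stokes equations on the
annulus with free outer boundary and Navier-slip inner boundary, and the resulting
triviality of steady states when `α ≤ μ/a`. -/
theorem steady_state_energy_identity (a b μ α : ℝ)
    (ha : 0 < a) (hab : a < b) (hμ : 0 < μ) (hα : 0 < α)
    (u : ℝ × ℝ → ℝ × ℝ) (P : ℝ × ℝ → ℝ)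
    (U : Set (ℝ × ℝ)) (hU : IsOpen U) (hUc : cann a b ⊆ U)
    (hu : ContDiffOn ℝ 2 u U) (hP : ContDiffOn ℝ 1 P U)
    (hdiv : ∀ x ∈ ann a b, pd1 (cmp1 u) x + pd2 (cmp2 u) x = 0)
    (heq1 : ∀ x ∈ ann a b,
      (u x).1 * pd1 (cmp1 u) x + (u x).2 * pd2 (cmp1 u) x
        = μ * (pd1 (pd1 (cmp1 u)) x + pd2 (pd2 (cmp1 u)) x) - pd1 P x)
    (heq2 : ∀ x ∈ ann a b,
      (u x).1 * pd1 (cmp2 u) x + (u x).2 * pd2 (cmp2 u) x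
        = μ * (pd1 (pd1 (cmp2 u)) x + pd2 (pd2 (cmp2 u)) x) - pd2 P x)
    (htan : ∀ x : ℝ × ℝ, (x.1 ^ 2 + x.2 ^ 2 = a ^ 2 ∨ x.1 ^ 2 + x.2 ^ 2 = b ^ 2) →
      (u x).1 * x.1 + (u x).2 * x.2 = 0)
    (hcurl : ∀ x : ℝ × ℝ, x.1 ^ 2 + x.2 ^ 2 = b ^ 2 →
      pd1 (cmp2 u) x - pd2 (cmp1 u) x = 0)
    (hns : navierSlip μ α a u) :
    (μ * ∫ x in ann a b,
        ((pd1 (cmp1 u) x) ^ 2 + (pd1 (cmp2 u) x) ^ 2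
          + (pd2 (cmp1 u) x) ^ 2 + (pd2 (cmp2 u) x) ^ 2))
      + (μ / b) * bInt b (fun x => (tang b u x) ^ 2)
      = (α - μ / a) * bInt a (fun x => (tang a u x) ^ 2)
    ∧ (α ≤ μ / a → ∀ x ∈ ann a b, u x = 0) := by
  have hb : 0 < b := ha.trans hab
  have hu1 : ContDiffOn ℝ 2 (cmp1 u) U := hu.fst
  have hu2 : ContDiffOn ℝ 2 (cmp2 u) U := hu.snd
  have hsqb : ∀ θ : ℝ, (b * Real.cos θ) ^ 2 + (b * Real.sin θ) ^ 2 = b ^ 2 := fun θ => by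
    linear_combination b ^ 2 * Real.sin_sq_add_cos_sq θ
  have hsqa : ∀ θ : ℝ, (a * Real.cos θ) ^ 2 + (a * Real.sin θ) ^ 2 = a ^ 2 := fun θ => by
    linear_combination a ^ 2 * Real.sin_sq_add_cos_sq θ
  have htanb : ∀ θ : ℝ,
      cmp1 u (b * Real.cos θ, b * Real.sin θ) * (b * Real.cos θ)
        + cmp2 u (b * Real.cos θ, b * Real.sin θ) * (b * Real.sin θ) = 0 :=
    fun θ => htan _ (Or.inr (hsqb θ))
  have htana : ∀ θ : ℝ,
      cmp1 u (a * Real.cos θ, a * Real.sin θ) * (a * Real.cos θ)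
        + cmp2 u (a * Real.cos θ, a * Real.sin θ) * (a * Real.sin θ) = 0 :=
    fun θ => htan _ (Or.inl (hsqa θ))
  have hcurlb : ∀ θ : ℝ, pd1 (cmp2 u) (b * Real.cos θ, b * Real.sin θ)
      - pd2 (cmp1 u) (b * Real.cos θ, b * Real.sin θ) = 0 :=
    fun θ => hcurl _ (hsqb θ)
  have hdivcancel : ∀ y : ℝ, a * y / a = y := fun y => mul_div_cancel_left₀ y ha.ne'
  have hslipa : ∀ θ : ℝ,
      μ * (Real.sin θ * (-Real.cos θ) * (pd1 (cmp1 u) (a * Real.cos θ, a * Real.sin θ)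
            + pd1 (cmp1 u) (a * Real.cos θ, a * Real.sin θ))
        + Real.sin θ * (-Real.sin θ) * (pd1 (cmp2 u) (a * Real.cos θ, a * Real.sin θ)
            + pd2 (cmp1 u) (a * Real.cos θ, a * Real.sin θ))
        + (-Real.cos θ) * (-Real.cos θ) * (pd2 (cmp1 u) (a * Real.cos θ, a * Real.sin θ)
            + pd1 (cmp2 u) (a * Real.cos θ, a * Real.sin θ))
        + (-Real.cos θ) * (-Real.sin θ) * (pd2 (cmp2 u) (a * Real.cos θ, a * Real.sin θ)
            + pd2 (cmp2 u) (a * Real.cos θ, a * Real.sin θ)))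
      = α * (cmp1 u (a * Real.cos θ, a * Real.sin θ) * Real.sin θ
          + cmp2 u (a * Real.cos θ, a * Real.sin θ) * (-Real.cos θ)) := by
    intro θ
    have h := hns (a * Real.cos θ, a * Real.sin θ) (hsqa θ)
    simp only [hdivcancel] at h
    exact h
  have KEY := annulus_divergence (μ := μ) (u1 := cmp1 u) (u2 := cmp2 u) (P := P)
    ha hab hU hUc hu1 hu2 hP hdiv heq1 heq2
  have OUT := outer_eval (μ := μ) (P := P) ha hab hU hUc hu1 hu2 hP htanb hcurlb
  have INN := inner_eval (μ := μ) (α := α) (P := P) ha hab hU hUc hu1 hu2 hP htana hslipa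
  have hIb : bInt b (fun x => (tang b u x) ^ 2)
      = ∫ θ in (0:ℝ)..(2 * π), (cmp1 u (b * Real.cos θ, b * Real.sin θ) * Real.sin θ
          - cmp2 u (b * Real.cos θ, b * Real.sin θ) * Real.cos θ) ^ 2 * b := by
    unfold bInt tang cmp1 cmp2
    apply intervalIntegral.integral_congr
    intro θ _
    field_simp
  have hIa : bInt a (fun x => (tang a u x) ^ 2)
      = ∫ θ in (0:ℝ)..(2 * π), (cmp1 u (a * Real.cos θ, a * Real.sin θ) * Real.sin θ
          - cmp2 u (a * Real.cos θ, a * Real.sin θ) * Real.cos θ) ^ 2 * a := by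
    unfold bInt tang cmp1 cmp2
    apply intervalIntegral.integral_congr
    intro θ _
    field_simp
  rw [MeasureTheory.integral_const_mul] at KEY
  have hident : (μ * ∫ x in ann a b,
        ((pd1 (cmp1 u) x) ^ 2 + (pd1 (cmp2 u) x) ^ 2
          + (pd2 (cmp1 u) x) ^ 2 + (pd2 (cmp2 u) x) ^ 2))
      + (μ / b) * bInt b (fun x => (tang b u x) ^ 2)
      = (α - μ / a) * bInt a (fun x => (tang a u x) ^ 2) := by
    rw [hIb, hIa]
    rw [OUT, INN] at KEY
    linarith [KEY]
  refine ⟨hident, ?_⟩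
  intro hαμ x₀ hx₀
  -- nonnegativity of the three terms
  have hBb_nn : 0 ≤ bInt b (fun x => (tang b u x) ^ 2) := by
    unfold bInt
    apply intervalIntegral.integral_nonneg (by linarith [Real.pi_pos])
    intro θ _
    exact mul_nonneg (sq_nonneg _) hb.le
  have hBa_nn : 0 ≤ bInt a (fun x => (tang a u x) ^ 2) := by
    unfold bInt
    apply intervalIntegral.integral_nonneg (by linarith [Real.pi_pos])
    intro θ _
    exact mul_nonneg (sq_nonneg _) ha.le
  have hI_nn : 0 ≤ ∫ x in ann a b,
      ((pd1 (cmp1 u) x) ^ 2 + (pd1 (cmp2 u) x) ^ 2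
        + (pd2 (cmp1 u) x) ^ 2 + (pd2 (cmp2 u) x) ^ 2) :=
    setIntegral_nonneg (isOpen_ann a b).measurableSet (fun x _ => by positivity)
  have hRHSle : (α - μ / a) * bInt a (fun x => (tang a u x) ^ 2) ≤ 0 := by
    have h1 : α - μ / a ≤ 0 := by linarith
    nlinarith
  have hIzero : ∫ x in ann a b,
      ((pd1 (cmp1 u) x) ^ 2 + (pd1 (cmp2 u) x) ^ 2
        + (pd2 (cmp1 u) x) ^ 2 + (pd2 (cmp2 u) x) ^ 2) = 0 := by
    have hdb : 0 < μ / b := div_pos hμ hb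
    nlinarith [hident, hBb_nn, hI_nn]
  have hBbzero : bInt b (fun x => (tang b u x) ^ 2) = 0 := by
    have hdb : 0 < μ / b := div_pos hμ hb
    nlinarith [hident, hBb_nn, hI_nn]
  -- continuity of the energy density
  have hsubann : ann a b ⊆ U := fun x hx => hUc ⟨hx.1.le, hx.2.le⟩
  have hsubcann : ann a b ⊆ cann a b := fun x hx => ⟨hx.1.le, hx.2.le⟩
  have cA : ContinuousOn (pd1 (cmp1 u)) U := pd1_continuousOn (hu1.of_le one_le_two) hU
  have cB : ContinuousOn (pd1 (cmp2 u)) U := pd1_continuousOn (hu2.of_le one_le_two) hU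
  have cC : ContinuousOn (pd2 (cmp1 u)) U := pd2_continuousOn (hu1.of_le one_le_two) hU
  have cD : ContinuousOn (pd2 (cmp2 u)) U := pd2_continuousOn (hu2.of_le one_le_two) hU
  have cSig : ContinuousOn (fun x => (pd1 (cmp1 u) x) ^ 2 + (pd1 (cmp2 u) x) ^ 2
      + (pd2 (cmp1 u) x) ^ 2 + (pd2 (cmp2 u) x) ^ 2) U :=
    (((cA.pow 2).add (cB.pow 2)).add (cC.pow 2)).add (cD.pow 2)
  -- compactness of the closed annulus
  have hcann_closed : IsClosed (cann a b) := by
    have : cann a b = (fun x : ℝ × ℝ => x.1 ^ 2 + x.2 ^ 2) ⁻¹' (Set.Icc (a ^ 2) (b ^ 2)) := rfl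
    rw [this]
    exact isClosed_Icc.preimage (by fun_prop)
  have hcann_bdd : Bornology.IsBounded (cann a b) := by
    apply (Metric.isBounded_closedBall (x := ((0 : ℝ × ℝ))) (r := b)).subset
    intro x hx
    have h1 : |x.1| ≤ b := by nlinarith [sq_abs x.1, sq_abs x.2, sq_nonneg x.2, abs_nonneg x.1, hx.2]
    have h2 : |x.2| ≤ b := by nlinarith [sq_abs x.1, sq_abs x.2, sq_nonneg x.1, abs_nonneg x.2, hx.2]
    rw [Metric.mem_closedBall, dist_zero_right, Prod.norm_def]
    exact max_le (by rwa [Real.norm_eq_abs]) (by rwa [Real.norm_eq_abs])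
  have hcann_cpt : IsCompact (cann a b) := Metric.isCompact_of_isClosed_isBounded
    hcann_closed hcann_bdd
  have hSigInt : IntegrableOn (fun x => (pd1 (cmp1 u) x) ^ 2 + (pd1 (cmp2 u) x) ^ 2
      + (pd2 (cmp1 u) x) ^ 2 + (pd2 (cmp2 u) x) ^ 2) (ann a b) :=
    ((cSig.mono hUc).integrableOn_compact hcann_cpt).mono_set hsubcann
  have hSig0 : ∀ x ∈ ann a b, (pd1 (cmp1 u) x) ^ 2 + (pd1 (cmp2 u) x) ^ 2
      + (pd2 (cmp1 u) x) ^ 2 + (pd2 (cmp2 u) x) ^ 2 = 0 :=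
    eqzero_of_setIntegral_zero (isOpen_ann a b) (cSig.mono hsubann)
      (fun x _ => by positivity) hSigInt hIzero
  have hz11 : ∀ x ∈ ann a b, pd1 (cmp1 u) x = 0 := by
    intro x hx
    have h := hSig0 x hx
    have : (pd1 (cmp1 u) x) ^ 2 = 0 := by
      nlinarith [sq_nonneg (pd1 (cmp2 u) x), sq_nonneg (pd2 (cmp1 u) x),
        sq_nonneg (pd2 (cmp2 u) x), sq_nonneg (pd1 (cmp1 u) x)]
    exact pow_eq_zero_iff two_ne_zero |>.mp this
  have hz12 : ∀ x ∈ ann a b, pd2 (cmp1 u) x = 0 := by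
    intro x hx
    have h := hSig0 x hx
    have : (pd2 (cmp1 u) x) ^ 2 = 0 := by
      nlinarith [sq_nonneg (pd1 (cmp2 u) x), sq_nonneg (pd2 (cmp1 u) x),
        sq_nonneg (pd2 (cmp2 u) x), sq_nonneg (pd1 (cmp1 u) x)]
    exact pow_eq_zero_iff two_ne_zero |>.mp this
  have hz21 : ∀ x ∈ ann a b, pd1 (cmp2 u) x = 0 := by
    intro x hx
    have h := hSig0 x hx
    have : (pd1 (cmp2 u) x) ^ 2 = 0 := by
      nlinarith [sq_nonneg (pd1 (cmp2 u) x), sq_nonneg (pd2 (cmp1 u) x),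
        sq_nonneg (pd2 (cmp2 u) x), sq_nonneg (pd1 (cmp1 u) x)]
    exact pow_eq_zero_iff two_ne_zero |>.mp this
  have hz22 : ∀ x ∈ ann a b, pd2 (cmp2 u) x = 0 := by
    intro x hx
    have h := hSig0 x hx
    have : (pd2 (cmp2 u) x) ^ 2 = 0 := by
      nlinarith [sq_nonneg (pd1 (cmp2 u) x), sq_nonneg (pd2 (cmp1 u) x),
        sq_nonneg (pd2 (cmp2 u) x), sq_nonneg (pd1 (cmp1 u) x)]
    exact pow_eq_zero_iff two_ne_zero |>.mp this
  -- the tangential component vanishes on the outer circle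
  have hqcont : Continuous (fun θ : ℝ =>
      (cmp1 u (b * Real.cos θ, b * Real.sin θ) * Real.sin θ
        - cmp2 u (b * Real.cos θ, b * Real.sin θ) * Real.cos θ) ^ 2 * b) := by
    have hmemb : ∀ θ : ℝ, ((b * Real.cos θ, b * Real.sin θ) : ℝ × ℝ) ∈ U :=
      fun θ => mem_U_polar ha hUc θ ⟨hab.le, le_rfl⟩
    have hc1 : Continuous (fun θ : ℝ => cmp1 u (b * Real.cos θ, b * Real.sin θ)) :=
      (hu1.continuousOn).comp_continuous (by fun_prop) hmemb
    have hc2 : Continuous (fun θ : ℝ => cmp2 u (b * Real.cos θ, b * Real.sin θ)) :=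
      (hu2.continuousOn).comp_continuous (by fun_prop) hmemb
    fun_prop
  have hq0 : ∀ θ : ℝ, (cmp1 u (b * Real.cos θ, b * Real.sin θ) * Real.sin θ
      - cmp2 u (b * Real.cos θ, b * Real.sin θ) * Real.cos θ) ^ 2 * b = 0 := by
    apply periodic_zero_of_integral_zero _ hqcont
      (fun θ => mul_nonneg (sq_nonneg _) hb.le)
    · intro θ
      simp [Real.cos_add_two_pi, Real.sin_add_two_pi]
    · rw [← hIb]
      exact hBbzero
  have htang0 : ∀ θ : ℝ, cmp1 u (b * Real.cos θ, b * Real.sin θ) * Real.sin θ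
      - cmp2 u (b * Real.cos θ, b * Real.sin θ) * Real.cos θ = 0 := by
    intro θ
    rcases mul_eq_zero.mp (hq0 θ) with h | h
    · exact pow_eq_zero_iff two_ne_zero |>.mp h
    · exact absurd h hb.ne'
  -- u vanishes on the outer circle
  have hbzero : ∀ θ : ℝ, cmp1 u (b * Real.cos θ, b * Real.sin θ) = 0
      ∧ cmp2 u (b * Real.cos θ, b * Real.sin θ) = 0 := by
    intro θ
    have e1 := htanb θ
    have e1' : cmp1 u (b * Real.cos θ, b * Real.sin θ) * Real.cos θ
        + cmp2 u (b * Real.cos θ, b * Real.sin θ) * Real.sin θ = 0 := by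
      apply mul_left_cancel₀ hb.ne'
      linear_combination e1
    have e2 := htang0 θ
    have hcs := Real.sin_sq_add_cos_sq θ
    constructor
    · linear_combination Real.cos θ * e1' + Real.sin θ * e2
        - cmp1 u (b * Real.cos θ, b * Real.sin θ) * hcs
    · linear_combination Real.sin θ * e1' - Real.cos θ * e2
        - cmp2 u (b * Real.cos θ, b * Real.sin θ) * hcs
  -- polar representation of x₀
  set ρ : ℝ := Real.sqrt (x₀.1 ^ 2 + x₀.2 ^ 2) with hρdef
  have hρnn : 0 ≤ x₀.1 ^ 2 + x₀.2 ^ 2 := by positivity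
  have hρsq : x₀.1 ^ 2 + x₀.2 ^ 2 = ρ ^ 2 := (Real.sq_sqrt hρnn).symm
  have hρpos : 0 < ρ := Real.sqrt_pos.mpr (by nlinarith [hx₀.1, sq_nonneg a, ha])
  have hρa : a < ρ := by
    have := hx₀.1
    rw [hρsq] at this
    exact lt_of_pow_lt_pow_left₀ 2 hρpos.le this
  have hρb : ρ < b := by
    have := hx₀.2
    rw [hρsq] at this
    exact lt_of_pow_lt_pow_left₀ 2 hb.le this
  obtain ⟨θ₀, hx₀eq⟩ := circle_rep hρpos hρsq
  have hval1 : cmp1 u (ρ * Real.cos θ₀, ρ * Real.sin θ₀)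
      = cmp1 u (b * Real.cos θ₀, b * Real.sin θ₀) :=
    ray_value ha hab hU hUc (hu1.of_le one_le_two) hz11 hz12 hρa hρb
  have hval2 : cmp2 u (ρ * Real.cos θ₀, ρ * Real.sin θ₀)
      = cmp2 u (b * Real.cos θ₀, b * Real.sin θ₀) :=
    ray_value ha hab hU hUc (hu2.of_le one_le_two) hz21 hz22 hρa hρb
  have h1 : (u x₀).1 = 0 := by
    show cmp1 u x₀ = 0
    rw [hx₀eq, hval1]
    exact (hbzero θ₀).1
  have h2 : (u x₀).2 = 0 := by
    show cmp2 u x₀ = 0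
    rw [hx₀eq, hval2]
    exact (hbzero θ₀).2
  exact Prod.ext (by rw [h1]; rfl) (by rw [h2]; rfl)
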